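/- With S_N the span of products of N tridiagonal Toeplitz matrices in R^{d×d}: if n + m ≥ d + 3, then E_{n,m} ∈ S_{d-1}. -/

import Mathlib

/-- `E_{n,m}` (1-based positions): 1 in position `(n, m)`, zeros elsewhere. -/
def matUnit (d : ℕ) (n m : ℤ) : Matrix (Fin d) (Fin d) ℝ :=
  Matrix.of fun i j => if (i : ℤ) + 1 = n ∧ (j : ℤ) + 1 = m then 1 else 0

/-- `To_d(1)`: tridiagonal Toeplitz matrices, `x_{ij} = w_{j-i}` for `|i-j| ≤ 1`, else `0`. -/
def Tod1 (d : ℕ) : Set (Matrix (Fin d) (Fin d) ℝ) :=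
  {A | ∃ w : ℤ → ℝ, ∀ i j : Fin d,
    A i j = if |(i : ℤ) - (j : ℤ)| ≤ 1 then w ((j : ℤ) - (i : ℤ)) else 0}

/-- `S_N`: finite sums of (ordered) products of `N` tridiagonal Toeplitz matrices. -/
def SN (d N : ℕ) : Set (Matrix (Fin d) (Fin d) ℝ) :=
  {A | ∃ n : ℕ, ∃ T : Fin n → Fin N → Matrix (Fin d) (Fin d) ℝ,
    (∀ i j, T i j ∈ Tod1 d) ∧ A = ∑ i, (List.ofFn (T i)).prod}

open Matrix

/-- The superdiagonal shift matrix. -/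
def Jmat (d : ℕ) : Matrix (Fin d) (Fin d) ℝ :=
  Matrix.of fun i j => if (j : ℕ) = (i : ℕ) + 1 then 1 else 0

/-- The subdiagonal shift matrix. -/
def Lmat (d : ℕ) : Matrix (Fin d) (Fin d) ℝ := (Jmat d)ᵀ

lemma Jmat_mem (d : ℕ) : Jmat d ∈ Tod1 d := by
  refine ⟨fun z => if z = 1 then 1 else 0, fun i j => ?_⟩
  simp only [Jmat, Matrix.of_apply, abs_le]
  split_ifs <;> (try norm_num) <;> (exfalso; omega)

lemma Lmat_mem (d : ℕ) : Lmat d ∈ Tod1 d := by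
  refine ⟨fun z => if z = -1 then 1 else 0, fun i j => ?_⟩
  simp only [Lmat, Jmat, Matrix.transpose_apply, Matrix.of_apply, abs_le]
  split_ifs <;> (try norm_num) <;> (exfalso; omega)

lemma negJmat_mem (d : ℕ) : -Jmat d ∈ Tod1 d := by
  refine ⟨fun z => if z = 1 then -1 else 0, fun i j => ?_⟩
  simp only [Jmat, Matrix.neg_apply, Matrix.of_apply, abs_le]
  split_ifs <;> (try norm_num) <;> (exfalso; omega)

lemma one_mem_Tod1 (d : ℕ) : (1 : Matrix (Fin d) (Fin d) ℝ) ∈ Tod1 d := by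
  refine ⟨fun z => if z = 0 then 1 else 0, fun i j => ?_⟩
  simp only [Matrix.one_apply, abs_le, Fin.ext_iff]
  split_ifs <;> (try norm_num) <;> (exfalso; omega)

lemma ite_one_mul_ite_one (P Q : Prop) [Decidable P] [Decidable Q] :
    (if P then (1:ℝ) else 0) * (if Q then 1 else 0) = if P ∧ Q then 1 else 0 := by
  split_ifs <;> simp_all

lemma Jmat_pow (d a : ℕ) (i j : Fin d) :
    ((Jmat d) ^ a) i j = if (j : ℕ) = (i : ℕ) + a then 1 else 0 := by
  induction a generalizing j with
  | zero =>
    simp [Matrix.one_apply, Fin.ext_iff, eq_comm]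
  | succ a ih =>
    rw [pow_succ, Matrix.mul_apply]
    have hterm : ∀ k : Fin d, ((Jmat d) ^ a) i k * (Jmat d) k j =
        if (k : ℕ) = (i : ℕ) + a ∧ (j : ℕ) = (k : ℕ) + 1 then 1 else 0 := by
      intro k
      rw [ih, Jmat]
      exact ite_one_mul_ite_one _ _
    simp_rw [hterm, ← add_assoc]
    by_cases h : (j : ℕ) = (i : ℕ) + a + 1
    · have hlt : (i : ℕ) + a < d := by have := j.isLt; omega
      rw [Finset.sum_eq_single (⟨(i : ℕ) + a, hlt⟩ : Fin d)]
      · rw [if_pos ⟨rfl, h⟩, if_pos h]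
      · intro k _ hne
        rw [if_neg]
        rintro ⟨h1, _⟩
        exact hne (Fin.ext h1)
      · intro hmem; exact absurd (Finset.mem_univ _) hmem
    · rw [if_neg h]
      apply Finset.sum_eq_zero
      intro k _
      rw [if_neg]
      rintro ⟨h1, h2⟩
      omega

lemma Lmat_pow (d b : ℕ) (k j : Fin d) :
    ((Lmat d) ^ b) k j = if (k : ℕ) = (j : ℕ) + b then 1 else 0 := by
  rw [Lmat, ← Matrix.transpose_pow, Matrix.transpose_apply, Jmat_pow]

lemma JL_apply (d a b : ℕ) (i j : Fin d) :
    ((Jmat d) ^ a * (Lmat d) ^ b) i j =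
      if (i : ℕ) + a = (j : ℕ) + b ∧ (i : ℕ) + a < d then 1 else 0 := by
  rw [Matrix.mul_apply]
  have hterm : ∀ k : Fin d, ((Jmat d) ^ a) i k * ((Lmat d) ^ b) k j =
      if (k : ℕ) = (i : ℕ) + a ∧ (k : ℕ) = (j : ℕ) + b then 1 else 0 := by
    intro k
    rw [Jmat_pow, Lmat_pow]
    exact ite_one_mul_ite_one _ _
  simp_rw [hterm]
  by_cases h : (i : ℕ) + a = (j : ℕ) + b ∧ (i : ℕ) + a < d
  · rw [if_pos h, Finset.sum_eq_single (⟨(i : ℕ) + a, h.2⟩ : Fin d)]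
    · rw [if_pos ⟨rfl, h.1⟩]
    · intro k _ hne
      rw [if_neg]
      rintro ⟨h1, _⟩
      exact hne (Fin.ext h1)
    · intro hmem; exact absurd (Finset.mem_univ _) hmem
  · rw [if_neg h]
    apply Finset.sum_eq_zero
    intro k _
    rw [if_neg]
    rintro ⟨h1, h2⟩
    exact h ⟨by omega, by have := k.isLt; omega⟩

lemma key_identity (d n m : ℕ) (hn : n ≤ d) (hm : m ≤ d) (hn1 : 1 ≤ n) (hm1 : 1 ≤ m) :
    (Jmat d) ^ (d - n) * (Lmat d) ^ (d - m)
      - (Jmat d) ^ (d - n + 1) * (Lmat d) ^ (d - m + 1) = matUnit d n m := by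
  ext i j
  rw [Matrix.sub_apply, JL_apply, JL_apply]
  simp only [matUnit, Matrix.of_apply]
  have hi := i.isLt
  have hj := j.isLt
  split_ifs <;> (try norm_num) <;> (exfalso; omega)

lemma ofFn_get_cast {α : Type*} (l : List α) (N : ℕ) (h : l.length = N) :
    List.ofFn (fun k : Fin N => l.get (Fin.cast h.symm k)) = l := by
  subst h
  exact List.ofFn_get l

/-- If `n, m ≤ d` and `n + m ≥ d + 3`, then `E_{n,m} ∈ S_{d-1}`. -/
theorem matUnit_mem_SN_of_add_ge (d n m : ℕ) (hn : n ≤ d) (hm : m ≤ d)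
    (hnm : d + 3 ≤ n + m) : matUnit d n m ∈ SN d (d - 1) := by
  set a := d - n with ha
  set b := d - m with hb
  set l1 : List (Matrix (Fin d) (Fin d) ℝ) :=
    List.replicate a (Jmat d) ++ List.replicate b (Lmat d)
      ++ List.replicate (n + m - d - 1) 1 with hl1
  set l2 : List (Matrix (Fin d) (Fin d) ℝ) :=
    -Jmat d :: (List.replicate a (Jmat d) ++ List.replicate (b + 1) (Lmat d)
      ++ List.replicate (n + m - d - 3) 1) with hl2
  have hlen1 : l1.length = d - 1 := by
    simp only [hl1, List.length_append, List.length_replicate]; omega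
  have hlen2 : l2.length = d - 1 := by
    simp only [hl2, List.length_cons, List.length_append, List.length_replicate]; omega
  refine ⟨2, ![fun k => l1.get (Fin.cast hlen1.symm k),
               fun k => l2.get (Fin.cast hlen2.symm k)], ?_, ?_⟩
  · have hmem1 : ∀ x ∈ l1, x ∈ Tod1 d := by
      intro x hx
      simp only [hl1, List.mem_append, List.mem_replicate] at hx
      rcases hx with (⟨_, rfl⟩ | ⟨_, rfl⟩) | ⟨_, rfl⟩
      · exact Jmat_mem d
      · exact Lmat_mem d
      · exact one_mem_Tod1 d
    have hmem2 : ∀ x ∈ l2, x ∈ Tod1 d := by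
      intro x hx
      simp only [hl2, List.mem_cons, List.mem_append, List.mem_replicate] at hx
      rcases hx with rfl | (⟨_, rfl⟩ | ⟨_, rfl⟩) | ⟨_, rfl⟩
      · exact negJmat_mem d
      · exact Jmat_mem d
      · exact Lmat_mem d
      · exact one_mem_Tod1 d
    intro i k
    fin_cases i
    · exact hmem1 _ (List.get_mem _ _)
    · exact hmem2 _ (List.get_mem _ _)
  · rw [Fin.sum_univ_two]
    simp only [Matrix.cons_val_zero, Matrix.cons_val_one, Matrix.head_cons]
    rw [ofFn_get_cast l1 _ hlen1, ofFn_get_cast l2 _ hlen2]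
    have hp1 : l1.prod = (Jmat d) ^ a * (Lmat d) ^ b := by
      rw [hl1, List.prod_append, List.prod_append, List.prod_replicate,
        List.prod_replicate, List.prod_replicate, one_pow, mul_one]
    have hp2 : l2.prod = -((Jmat d) ^ (a + 1) * (Lmat d) ^ (b + 1)) := by
      rw [hl2, List.prod_cons, List.prod_append, List.prod_append, List.prod_replicate,
        List.prod_replicate, List.prod_replicate, one_pow, mul_one, neg_mul,
        ← mul_assoc, ← pow_succ']
    rw [hp1, hp2, ← key_identity d n m hn hm (by omega) (by omega), sub_eq_add_neg]
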